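/- arXiv:1106.4678 — 2 statements merged into one kernel-verified Lean document; each statement's English description precedes it below -/
import Mathlib

section
/- (Quadratic convexity theorem) Let n + 1 ≥ 3 and let q : ℝ^{n+1} → ℝ² be the map x ↦ (q₀(x), q₁(x)), where q₀, q₁ are real homogeneous quadratic forms. Then the image q(S^n) of the unit sphere S^n = {x ∈ ℝ^{n+1} : ‖x‖ = 1} is a convex subset of the plane ℝ². -/
open CategoryTheory

noncomputable section

/-- The singular chain complex functor with `ℤ/2` coefficients: compose the singular
simplicial set functor with the free `ℤ/2`-module functor and the alternating face map
complex. -/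
def singularChainFunctor : TopCat ⥤ ChainComplex (ModuleCat (ZMod 2)) ℕ :=
  TopCat.toSSet ⋙ ((SimplicialObject.whiskering _ _).obj (ModuleCat.free (ZMod 2))) ⋙
    AlgebraicTopology.alternatingFaceMapComplex _

/-- Singular homology of a topological space with `ℤ/2` coefficients. -/
def homologyZ2 (X : Type) [TopologicalSpace X] (k : ℕ) : ModuleCat (ZMod 2) :=
  (singularChainFunctor.obj (TopCat.of X)).homology k

/-- `ℤ/2` Betti numbers: `b_k(X) = dim_{ℤ/2} H_k(X; ℤ/2)`. -/
def bettiZ2 (X : Type) [TopologicalSpace X] (k : ℕ) : ℕ :=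
  Module.finrank (ZMod 2) (homologyZ2 X k)

/-- Reduced `ℤ/2` Betti numbers: `b̃_k = b_k` for `k ≥ 1` and `b̃_0 = b_0 - 1`
(for nonempty spaces). -/
def reducedBettiZ2 (X : Type) [TopologicalSpace X] (k : ℕ) : ℕ :=
  if k = 0 then bettiZ2 X 0 - 1 else bettiZ2 X k

/-- The singular cochain complex functor with `ℤ/2` coefficients, obtained by dualizing
the singular chain complex. -/
def singularCochainFunctor : TopCatᵒᵖ ⥤ CochainComplex (ModuleCat (ZMod 2)) ℕ :=
  singularChainFunctor.op ⋙ HomologicalComplex.opFunctor _ _ ⋙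
    ((linearYoneda (ZMod 2) (ModuleCat (ZMod 2))).obj
      (ModuleCat.of (ZMod 2) (ZMod 2))).mapHomologicalComplex _

/-- Singular cohomology of a topological space with `ℤ/2` coefficients. -/
def cohomologyZ2 (X : Type) [TopologicalSpace X] (k : ℕ) : ModuleCat (ZMod 2) :=
  (singularCochainFunctor.obj (Opposite.op (TopCat.of X))).homology k

/-- The map induced on `ℤ/2` singular cohomology by a continuous map. -/
def cohomologyMap {X Y : Type} [TopologicalSpace X] [TopologicalSpace Y]
    (f : C(X, Y)) (k : ℕ) : cohomologyZ2 Y k ⟶ cohomologyZ2 X k :=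
  HomologicalComplex.homologyMap
    (singularCochainFunctor.map (show TopCat.of X ⟶ TopCat.of Y from TopCat.ofHom f).op) k

/-- Relative singular homology with `ℤ/2` coefficients of a pair of subsets `T ⊆ S`:
the homology of the quotient (cokernel) of the singular chain complexes. -/
def relHomologyZ2 {W : Type} [TopologicalSpace W] (S T : Set W) (h : T ⊆ S) (k : ℕ) :
    ModuleCat (ZMod 2) :=
  (Limits.cokernel (singularChainFunctor.map
    (TopCat.ofHom ⟨Set.inclusion h, continuous_inclusion h⟩ : TopCat.of T ⟶ TopCat.of S))).homology k

/-- Relative `ℤ/2` Betti numbers of a pair `T ⊆ S`. -/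
def relBettiZ2 {W : Type} [TopologicalSpace W] (S T : Set W) (h : T ⊆ S) (k : ℕ) : ℕ :=
  Module.finrank (ZMod 2) (relHomologyZ2 S T h k)

/-- The quotient topology on the real projective space of a topological vector space. -/
instance projSpaceTop (V : Type*) [AddCommGroup V] [Module ℝ V] [TopologicalSpace V] :
    TopologicalSpace (Projectivization ℝ V) :=
  inferInstanceAs (TopologicalSpace (Quotient (projectivizationSetoid ℝ V)))

/-- The positive inertia index `i⁺` of a real quadratic form: the maximal dimension of a
subspace on which the form is positive definite. -/
def posInertia {V : Type*} [AddCommGroup V] [Module ℝ V] (g : QuadraticForm ℝ V) : ℕ :=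
  sSup {d | ∃ W : Submodule ℝ V, Module.finrank ℝ ↥W = d ∧ ∀ x ∈ W, x ≠ 0 → 0 < g x}

/-- The negative inertia index `i⁻` of a real quadratic form: `i⁻(g) = i⁺(-g)`. -/
def negInertia {V : Type*} [AddCommGroup V] [Module ℝ V] (g : QuadraticForm ℝ V) : ℕ :=
  posInertia (-g)

/-- The kernel (radical) of a real quadratic form: the kernel of the associated
symmetric bilinear form. -/
def qfKer {V : Type*} [AddCommGroup V] [Module ℝ V] (g : QuadraticForm ℝ V) :
    Submodule ℝ V :=
  LinearMap.ker (QuadraticMap.associated (R := ℝ) g)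

/-- The intersection of the two quadrics `{q₀ = 0}` and `{q₁ = 0}` in the real projective
space `ℝP^n`. -/
def projQuadricSet {n : ℕ} (q₀ q₁ : QuadraticForm ℝ (EuclideanSpace ℝ (Fin (n + 1)))) :
    Set (Projectivization ℝ (EuclideanSpace ℝ (Fin (n + 1)))) :=
  {p | ∃ x : EuclideanSpace ℝ (Fin (n + 1)), ∃ hx : x ≠ 0,
    p = Projectivization.mk ℝ x hx ∧ q₀ x = 0 ∧ q₁ x = 0}

/-- Nonsingularity of the intersection of two quadrics: at every nonzero common zero the
differentials of the two forms are linearly independent, i.e. `0` is a regular value of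
`x ↦ (q₀ x, q₁ x)` on `ℝ^{n+1} ∖ {0}`. -/
def NonsingularPair {n : ℕ} (q₀ q₁ : QuadraticForm ℝ (EuclideanSpace ℝ (Fin (n + 1)))) :
    Prop :=
  ∀ x : EuclideanSpace ℝ (Fin (n + 1)), x ≠ 0 → q₀ x = 0 → q₁ x = 0 →
    LinearIndependent ℝ ![fderiv ℝ (fun y => q₀ y) x, fderiv ℝ (fun y => q₁ y) x]


section QCAux

open QuadraticMap

variable {m : ℕ}
abbrev Em (m : ℕ) := EuclideanSpace ℝ (Fin m)

def Qn (m : ℕ) : QuadraticForm ℝ (Em m) := LinearMap.BilinMap.toQuadraticMap (innerₗ (Em m))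

lemma Qn_apply (z : Em m) : Qn m z = ‖z‖^2 := by
  simp only [Qn, LinearMap.BilinMap.toQuadraticMap_apply,
    LinearMap.flip_apply, innerₗ_apply_apply]
  exact real_inner_self_eq_norm_sq z

lemma bilin_cont (B : LinearMap.BilinForm ℝ (Em m)) : Continuous fun z => B z z := by
  set T2 : Em m →ₗ[ℝ] (Em m →L[ℝ] ℝ) :=
    ((LinearMap.toContinuousLinearMap (𝕜 := ℝ) (E := Em m) (F' := ℝ) :
      (Em m →ₗ[ℝ] ℝ) ≃ₗ[ℝ] (Em m →L[ℝ] ℝ)) :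
      (Em m →ₗ[ℝ] ℝ) →ₗ[ℝ] (Em m →L[ℝ] ℝ)).comp B with hT2
  have hc : Continuous T2 := T2.continuous_of_finiteDimensional
  have h : Continuous fun z => (T2 z) z := hc.clm_apply continuous_id
  have he : ∀ z, (T2 z) z = B z z := fun z => by
    simp [hT2, LinearMap.coe_toContinuousLinearMap']
  simpa only [he] using h

lemma qf_cont (Q : QuadraticForm ℝ (Em m)) : Continuous fun z => Q z := by
  have h2 : ∀ z, Q z = (1/2 : ℝ) * (polarBilin Q z z) := by
    intro z
    rw [polarBilin_apply_apply, polar_self]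
    push_cast
    ring
  simp only [h2]
  exact continuous_const.mul (bilin_cont (polarBilin Q))

variable {m : ℕ}

local notation "Em" => EuclideanSpace ℝ (Fin m)

lemma indep_coeffs {x y : Em} (hx0 : x ≠ 0) (hxy : ∀ r : ℝ, y ≠ r • x)
    {r s : ℝ} (hrs : r • x + s • y = 0) : r = 0 ∧ s = 0 := by
  by_cases hs : s = 0
  · subst hs
    simp only [zero_smul, add_zero, smul_eq_zero] at hrs
    exact ⟨hrs.resolve_right hx0, rfl⟩
  · exfalso
    apply hxy (s⁻¹ * (-r))
    have h1 : s • y = (-r) • x := by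
      rw [neg_smul]; exact eq_neg_of_add_eq_zero_right hrs
    have := congrArg (fun v => s⁻¹ • v) h1
    simpa [smul_smul, inv_mul_cancel₀ hs] using this

lemma qf_expand2 (h : QuadraticForm ℝ Em) (x y : Em) (a t : ℝ) :
    h (a • x + t • y) = (a*a) * h x + (t*t) * h y + (a * t) * polar h x y := by
  rw [QuadraticMap.map_add (⇑h) (a • x) (t • y), QuadraticMap.map_smul, QuadraticMap.map_smul,
    polar_smul_left, polar_smul_right, smul_smul]
  simp only [smul_eq_mul]
  try ring

lemma qf_expand3 (h : QuadraticForm ℝ Em) (x y z : Em) (a t c : ℝ) :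
    h (a • x + t • y + c • z) = (a*a) * h x + (t*t) * h y + (c*c) * h z
      + (a * t) * polar h x y + (a * c) * polar h x z + (t * c) * polar h y z := by
  rw [add_assoc, QuadraticMap.map_add (⇑h) (a • x) (t • y + c • z), QuadraticMap.map_smul,
    qf_expand2, polar_smul_left, polar_add_right, polar_smul_right, polar_smul_right]
  simp only [smul_eq_mul]
  ring

lemma cone_connect (hm : 3 ≤ m) (h : QuadraticForm ℝ Em)
    (x y : Em) (hx0 : x ≠ 0) (hy0 : y ≠ 0)
    (hxy : ∀ r : ℝ, y ≠ r • x)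
    (hhx : h x = 0) (hhy : h y = 0) :
    ∃ (C : Set Em) (γ : ℝ), γ ≠ 0 ∧ IsConnected C ∧ x ∈ C ∧ γ • y ∈ C ∧
      ∀ z ∈ C, z ≠ 0 ∧ h z = 0 := by
  set P := polar h x y with hPdef
  by_cases hP : P = 0
  · -- straight segment from x to y
    refine ⟨(fun t : ℝ => (1 - t) • x + t • y) '' Set.Icc 0 1, 1, one_ne_zero, ?_, ?_, ?_, ?_⟩
    · have c0 : Continuous fun t : ℝ => (1 - t) • x + t • y :=
        ((continuous_const.sub continuous_id).smul continuous_const).add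
          (continuous_id.smul continuous_const)
      exact (isConnected_Icc zero_le_one).image _ c0.continuousOn
    · exact ⟨0, by simp, by simp⟩
    · exact ⟨1, by simp, by simp⟩
    · rintro z ⟨t, _, rfl⟩
      constructor
      · intro h0
        obtain ⟨h1, h2⟩ := indep_coeffs hx0 hxy h0
        linarith
      · simp only
        rw [qf_expand2, hhx, hhy, ← hPdef, hP]
        ring
  · -- find z with polar h x z = 0 = polar h y z
    set φ : Em →ₗ[ℝ] ℝ × ℝ := LinearMap.prod (polarBilin h x) (polarBilin h y) with hφdef
    have hker : LinearMap.ker φ ≠ ⊥ := by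
      intro hbot
      have h1 := LinearMap.finrank_range_add_finrank_ker φ
      have h2 : Module.finrank ℝ (LinearMap.range φ) ≤ 2 := by
        simpa using Submodule.finrank_le (LinearMap.range φ)
      rw [hbot] at h1
      simp only [finrank_bot, add_zero, finrank_euclideanSpace_fin] at h1
      omega
    obtain ⟨z, hzK, hz0⟩ := Submodule.exists_mem_ne_zero_of_ne_bot hker
    have hzker := (LinearMap.mem_ker).mp hzK
    rw [hφdef] at hzker
    simp only [LinearMap.prod_apply, Function.prod, Prod.mk_eq_zero] at hzker
    have hxz : polar h x z = 0 := hzker.1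
    have hyz : polar h y z = 0 := hzker.2
    have hz_span : ∀ a b : ℝ, z ≠ a • x + b • y := by
      intro a b hzab
      have e1 : polar h x z = a * (2 * h x) + b * P := by
        rw [hzab, polar_add_right, polar_smul_right, polar_smul_right, hPdef]
        have := polar_self h x
        simp only [smul_eq_mul] at this ⊢
        rw [this]; push_cast; ring
      have e2 : polar h y z = a * P + b * (2 * h y) := by
        rw [hzab, polar_add_right, polar_smul_right, polar_smul_right, hPdef, polar_comm]
        have := polar_self h y
        simp only [smul_eq_mul] at this ⊢
        rw [this]; push_cast; ring
      rw [hxz, hhx] at e1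
      rw [hyz, hhy] at e2
      have hb : b = 0 := by
        rcases mul_eq_zero.mp (by linarith : b * P = 0) with h' | h'
        exacts [h', absurd h' hP]
      have ha : a = 0 := by
        rcases mul_eq_zero.mp (by linarith : a * P = 0) with h' | h'
        exacts [h', absurd h' hP]
      rw [ha, hb] at hzab
      simp at hzab
      exact hz0 hzab
    by_cases hδ : h z = 0
    · -- two segments x → z → y
      refine ⟨((fun t : ℝ => (1 - t) • x + t • z) '' Set.Icc 0 1) ∪
        ((fun t : ℝ => (1 - t) • z + t • y) '' Set.Icc 0 1), 1, one_ne_zero, ?_, ?_, ?_, ?_⟩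
      · have c1 : Continuous fun t : ℝ => (1 - t) • x + t • z :=
          ((continuous_const.sub continuous_id).smul continuous_const).add
            (continuous_id.smul continuous_const)
        have c2 : Continuous fun t : ℝ => (1 - t) • z + t • y :=
          ((continuous_const.sub continuous_id).smul continuous_const).add
            (continuous_id.smul continuous_const)
        apply IsConnected.union
        · exact ⟨z, ⟨1, by simp, by simp⟩, ⟨0, by simp, by simp⟩⟩
        · exact (isConnected_Icc zero_le_one).image _ c1.continuousOn
        · exact (isConnected_Icc zero_le_one).image _ c2.continuousOn
      · exact Or.inl ⟨0, by simp, by simp⟩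
      · exact Or.inr ⟨1, by simp, by simp⟩
      · rintro w (⟨t, _, rfl⟩ | ⟨t, _, rfl⟩)
        · constructor
          · intro h0
            rcases eq_or_ne t 0 with rfl | ht0
            · simp at h0; exact hx0 h0
            rcases eq_or_ne t 1 with rfl | ht1
            · simp at h0; exact hz0 h0
            · apply hz_span (-(1-t)/t) 0
              have h0' : (1 - t) • x + t • z = 0 := h0
              have : z = (t⁻¹ * (-(1-t))) • x := by
                have h1 : t • z = (-(1-t)) • x := by
                  rw [neg_smul]
                  exact eq_neg_of_add_eq_zero_right h0'
                have := congrArg (fun v => t⁻¹ • v) h1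
                simpa [smul_smul, inv_mul_cancel₀ ht0] using this
              rw [this]
              simp only [zero_smul, add_zero]
              rw [div_eq_inv_mul]
          · simp only
            rw [qf_expand2, hhx, hδ, hxz]
            ring
        · constructor
          · intro h0
            rcases eq_or_ne t 0 with rfl | ht0
            · simp at h0; exact hz0 h0
            rcases eq_or_ne t 1 with rfl | ht1
            · simp at h0; exact hy0 h0
            · apply hz_span 0 (-t/(1-t))
              have h1t : (1:ℝ) - t ≠ 0 := sub_ne_zero.mpr (Ne.symm ht1)
              have h0' : (1 - t) • z + t • y = 0 := h0
              have : z = ((1-t)⁻¹ * (-t)) • y := by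
                have h2 : (1-t) • z = (-t) • y := by
                  rw [neg_smul]
                  exact eq_neg_of_add_eq_zero_left h0'
                have := congrArg (fun v => (1-t)⁻¹ • v) h2
                simpa [smul_smul, inv_mul_cancel₀ h1t] using this
              rw [this]
              simp only [zero_smul, zero_add]
              rw [div_eq_inv_mul]
          · simp only
            rw [qf_expand2, hhy, hδ]
            rw [polar_comm] at hyz
            rw [hyz]
            ring
    · -- the curved path
      set γ : ℝ := -(h z) / P with hγdef
      have hγ : γ ≠ 0 := div_ne_zero (neg_ne_zero.mpr hδ) hP
      refine ⟨(fun t : ℝ => (1 - t) • x + (γ * t^2) • y + (t * Real.sqrt (1 - t)) • z) ''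
        Set.Icc 0 1, γ, hγ, ?_, ?_, ?_, ?_⟩
      · refine (isConnected_Icc zero_le_one).image _ (Continuous.continuousOn ?_)
        apply Continuous.add
        apply Continuous.add
        · exact (continuous_const.sub continuous_id).smul continuous_const
        · exact (continuous_const.mul (continuous_pow 2)).smul continuous_const
        · exact (continuous_id.mul (Real.continuous_sqrt.comp
            (continuous_const.sub continuous_id))).smul continuous_const
      · exact ⟨0, by simp, by simp⟩
      · refine ⟨1, by simp, by simp⟩
      · rintro w ⟨t, ht, rfl⟩
        simp only [Set.mem_Icc] at ht
        constructor
        · intro h0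
          have h0' : (1 - t) • x + (γ * t^2) • y + (t * Real.sqrt (1 - t)) • z = 0 := h0
          rcases eq_or_ne t 1 with rfl | ht1
          · rw [sub_self, zero_smul, Real.sqrt_zero, mul_zero, zero_smul, zero_add,
              add_zero, one_pow, mul_one] at h0'
            rcases smul_eq_zero.mp h0' with hc | hy'
            exacts [hγ hc, hy0 hy']
          · have h1t : (1:ℝ) - t ≠ 0 := sub_ne_zero.mpr (Ne.symm ht1)
            rcases eq_or_ne t 0 with rfl | ht0
            · apply hx0
              have h0'' := h0'
              norm_num at h0''
              exact h0''
            · have htlt : t < 1 := lt_of_le_of_ne ht.2 ht1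
              have hs : t * Real.sqrt (1 - t) ≠ 0 := by
                apply mul_ne_zero ht0
                exact Real.sqrt_ne_zero'.mpr (by linarith)
              apply hz_span (-(1-t)/(t * Real.sqrt (1 - t))) (-(γ * t^2)/(t * Real.sqrt (1 - t)))
              have h1 : (t * Real.sqrt (1 - t)) • z = -((1 - t) • x + (γ * t^2) • y) :=
                eq_neg_of_add_eq_zero_right h0'
              have := congrArg (fun v => (t * Real.sqrt (1 - t))⁻¹ • v) h1
              simp only [smul_smul, inv_mul_cancel₀ hs, one_smul] at this
              rw [this]
              rw [smul_neg, smul_add, smul_smul, smul_smul, neg_add, ← neg_smul, ← neg_smul]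
              congr 1 <;> · congr 1; field_simp
        · simp only
          rw [qf_expand3, hhx, hhy, hxz, hyz, ← hPdef]
          have hsq : Real.sqrt (1 - t) ^ 2 = 1 - t :=
            Real.sq_sqrt (by linarith [ht.2])
          have : t * Real.sqrt (1 - t) * (t * Real.sqrt (1 - t)) = t^2 * (1 - t) := by
            rw [show t * Real.sqrt (1-t) * (t * Real.sqrt (1-t)) = t^2 * (Real.sqrt (1-t))^2 by ring, hsq]
          rw [this, hγdef]
          field_simp
          ring

end QCAux

set_option maxHeartbeats 2000000 in
/-- **Quadratic convexity theorem.** For `n + 1 ≥ 3` the image of the unit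
sphere `S^n` under the quadratic map `x ↦ (q₀(x), q₁(x))` is a convex subset of the
plane. -/
theorem quadratic_convexity (n : ℕ) (hn : 3 ≤ n + 1)
    (q₀ q₁ : QuadraticForm ℝ (EuclideanSpace ℝ (Fin (n + 1)))) :
    Convex ℝ ((fun x => (q₀ x, q₁ x)) ''
      {x : EuclideanSpace ℝ (Fin (n + 1)) | ‖x‖ = 1}) := by
  rintro a ⟨x, hx1, hxa⟩ b ⟨y, hy1, hyb⟩ s u hs hu hsu
  simp only [Set.mem_setOf_eq] at hx1 hy1
  by_cases hab : a = b
  · have hcomb : s • a + u • b = b := by rw [hab, ← add_smul, hsu, one_smul]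
    exact ⟨y, hy1, by rw [hyb, hcomb]⟩
  · have ha1 : q₀ x = a.1 := by rw [← hxa]
    have ha2 : q₁ x = a.2 := by rw [← hxa]
    have hb1 : q₀ y = b.1 := by rw [← hyb]
    have hb2 : q₁ y = b.2 := by rw [← hyb]
    set α : ℝ := b.2 - a.2 with hαdef
    set β : ℝ := a.1 - b.1 with hβdef
    set c : ℝ := α * a.1 + β * a.2 with hcdef
    have hαβ : α^2 + β^2 ≠ 0 := by
      intro h0
      apply hab
      have hα : α = 0 := by nlinarith [sq_nonneg α, sq_nonneg β]
      have hβ : β = 0 := by nlinarith [sq_nonneg α, sq_nonneg β]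
      have e1 : a.1 = b.1 := by rw [hβdef] at hβ; linarith
      have e2 : a.2 = b.2 := by rw [hαdef] at hα; linarith
      exact Prod.ext e1 e2
    set h : QuadraticForm ℝ (EuclideanSpace ℝ (Fin (n+1))) :=
      α • q₀ + β • q₁ - c • Qn (n+1) with hhdef
    have happ : ∀ z, h z = α * q₀ z + β * q₁ z - c * ‖z‖^2 := by
      intro z
      rw [hhdef]
      rw [QuadraticMap.sub_apply, QuadraticMap.add_apply, QuadraticMap.smul_apply,
        QuadraticMap.smul_apply, QuadraticMap.smul_apply, Qn_apply]
      simp [smul_eq_mul]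
    have hca : α * a.1 + β * a.2 = c := hcdef.symm
    have hcb : α * b.1 + β * b.2 = c := by rw [hcdef, hαdef, hβdef]; ring
    have hhx : h x = 0 := by rw [happ, ha1, ha2, hx1]; rw [← hca]; ring
    have hhy : h y = 0 := by rw [happ, hb1, hb2, hy1]; rw [← hcb]; ring
    have hx0 : x ≠ 0 := fun h0 => by rw [h0, norm_zero] at hx1; exact one_ne_zero hx1.symm
    have hy0 : y ≠ 0 := fun h0 => by rw [h0, norm_zero] at hy1; exact one_ne_zero hy1.symm
    have hxy : ∀ r : ℝ, y ≠ r • x := by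
      intro r hr
      apply hab
      have hnorm : (1:ℝ) = |r| := by
        rw [← hy1, hr, norm_smul, Real.norm_eq_abs, hx1, mul_one]
      have hr2 : r * r = 1 := by
        rw [← abs_mul_abs_self r, ← hnorm, mul_one]
      rw [← hxa, ← hyb]
      simp only
      rw [hr, QuadraticMap.map_smul, QuadraticMap.map_smul]
      simp [smul_eq_mul, hr2]
    obtain ⟨C, γ, hγ, hCconn, hxC, hyC, hCprop⟩ :=
      cone_connect (m := n + 1) hn h x y hx0 hy0 hxy hhx hhy
    set F : EuclideanSpace ℝ (Fin (n+1)) → ℝ :=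
      fun z => (-β * q₀ z + α * q₁ z) / ‖z‖^2 with hFdef
    have hFcont : ContinuousOn F C := by
      apply ContinuousOn.div
      · exact ((continuous_const.mul (qf_cont q₀)).add
          (continuous_const.mul (qf_cont q₁))).continuousOn
      · exact (continuous_norm.pow 2).continuousOn
      · intro z hz
        exact pow_ne_zero 2 (norm_ne_zero_iff.mpr (hCprop z hz).1)
    set Ma : ℝ := -β * a.1 + α * a.2 with hMadef
    set Mb : ℝ := -β * b.1 + α * b.2 with hMbdef
    set μ : ℝ := s * Ma + u * Mb with hμdef
    have hFx : F x = Ma := by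
      rw [hFdef]
      simp only
      rw [hx1, ha1, ha2, hMadef]
      norm_num
    have hFy : F (γ • y) = Mb := by
      rw [hFdef]
      simp only
      rw [QuadraticMap.map_smul, QuadraticMap.map_smul, norm_smul, hy1, hb1, hb2]
      simp only [smul_eq_mul, mul_one, Real.norm_eq_abs, mul_pow, sq_abs]
      rw [hMbdef]
      have : γ^2 ≠ 0 := pow_ne_zero 2 hγ
      field_simp
    have hμmem : μ ∈ F '' C := by
      have hconn : _root_.IsConnected (F '' C) := hCconn.image F hFcont
      have hord : (F '' C).OrdConnected := hconn.isPreconnected.ordConnected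
      have h1 : Ma ∈ F '' C := ⟨x, hxC, hFx⟩
      have h2 : Mb ∈ F '' C := ⟨γ • y, hyC, hFy⟩
      have hbet : μ ∈ Set.uIcc Ma Mb := by
        rw [Set.mem_uIcc, hμdef]
        have e3 : s * Ma + u * Ma = Ma := by rw [← add_mul, hsu, one_mul]
        have e4 : s * Mb + u * Mb = Mb := by rw [← add_mul, hsu, one_mul]
        rcases le_total Ma Mb with hle | hle
        · left
          have e1 := mul_le_mul_of_nonneg_left hle hu
          have e2 := mul_le_mul_of_nonneg_left hle hs
          exact ⟨by linarith [e1, e3], by linarith [e2, e4]⟩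
        · right
          have e1 := mul_le_mul_of_nonneg_left hle hu
          have e2 := mul_le_mul_of_nonneg_left hle hs
          exact ⟨by linarith [e2, e4], by linarith [e1, e3]⟩
      exact hord.uIcc_subset h1 h2 hbet
    obtain ⟨z, hzC, hzF⟩ := hμmem
    obtain ⟨hz0, hzh⟩ := hCprop z hzC
    have hr : ‖z‖ ≠ 0 := norm_ne_zero_iff.mpr hz0
    have hr2 : (‖z‖:ℝ)^2 ≠ 0 := pow_ne_zero 2 hr
    refine ⟨‖z‖⁻¹ • z, ?_, ?_⟩
    · show ‖‖z‖⁻¹ • z‖ = 1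
      rw [norm_smul, norm_inv, norm_norm, inv_mul_cancel₀ hr]
    · show (q₀ (‖z‖⁻¹ • z), q₁ (‖z‖⁻¹ • z)) = s • a + u • b
      have hq0w : q₀ (‖z‖⁻¹ • z) = ‖z‖⁻¹ * ‖z‖⁻¹ * q₀ z := by
        rw [QuadraticMap.map_smul]; simp [smul_eq_mul]
      have hq1w : q₁ (‖z‖⁻¹ • z) = ‖z‖⁻¹ * ‖z‖⁻¹ * q₁ z := by
        rw [QuadraticMap.map_smul]; simp [smul_eq_mul]
      have hzL : α * q₀ z + β * q₁ z = c * ‖z‖^2 := by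
        have := hzh; rw [happ] at this; linarith
      have hL : α * q₀ (‖z‖⁻¹ • z) + β * q₁ (‖z‖⁻¹ • z) = c := by
        rw [hq0w, hq1w]
        have e : α * (‖z‖⁻¹ * ‖z‖⁻¹ * q₀ z) + β * (‖z‖⁻¹ * ‖z‖⁻¹ * q₁ z)
            = (α * q₀ z + β * q₁ z) * (‖z‖⁻¹ * ‖z‖⁻¹) := by ring
        rw [e, hzL, pow_two]
        field_simp
      have hM : -β * q₀ (‖z‖⁻¹ • z) + α * q₁ (‖z‖⁻¹ • z) = μ := by
        rw [hq0w, hq1w, ← hzF, hFdef]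
        simp only
        rw [pow_two]
        field_simp
      have hv1 : α * (s*a.1+u*b.1) + β * (s*a.2+u*b.2) = c := by
        have e : α*(s*a.1+u*b.1) + β*(s*a.2+u*b.2)
            = s*(α*a.1+β*a.2) + u*(α*b.1+β*b.2) := by ring
        rw [e, hca, hcb, ← add_mul, hsu, one_mul]
      have hv2 : -β * (s*a.1+u*b.1) + α * (s*a.2+u*b.2) = μ := by
        rw [hμdef, hMadef, hMbdef]; ring
      have e1' : α * (q₀ (‖z‖⁻¹ • z) - (s*a.1+u*b.1))
          + β * (q₁ (‖z‖⁻¹ • z) - (s*a.2+u*b.2)) = 0 := by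
        linear_combination hL - hv1
      have e2' : -β * (q₀ (‖z‖⁻¹ • z) - (s*a.1+u*b.1))
          + α * (q₁ (‖z‖⁻¹ • z) - (s*a.2+u*b.2)) = 0 := by
        linear_combination hM - hv2
      have hd1 : q₀ (‖z‖⁻¹ • z) = s*a.1 + u*b.1 := by
        have h9 : (α^2+β^2) * (q₀ (‖z‖⁻¹ • z) - (s*a.1+u*b.1)) = 0 := by
          linear_combination α * e1' - β * e2'
        have := (mul_eq_zero.mp h9).resolve_left hαβ
        linarith
      have hd2 : q₁ (‖z‖⁻¹ • z) = s*a.2 + u*b.2 := by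
        have h9 : (α^2+β^2) * (q₁ (‖z‖⁻¹ • z) - (s*a.2+u*b.2)) = 0 := by
          linear_combination β * e1' + α * e2'
        have := (mul_eq_zero.mp h9).resolve_left hαβ
        linarith
      have hrhs : s • a + u • b = (s*a.1+u*b.1, s*a.2+u*b.2) := by
        rw [Prod.ext_iff]
        constructor <;> simp [smul_eq_mul]
      rw [hrhs]
      exact Prod.ext hd1 hd2

end
end

section
/- Let g be a real quadratic form on ℝ^m and let p be a positive definite quadratic form on ℝ^m. Then there exists ε₀ > 0 such that for every ε with 0 < ε < ε₀: i⁻(g − εp) = i⁻(g) + dim ker g. -/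
open CategoryTheory

noncomputable section

section InertiaAux

open Module

variable {V : Type*} [AddCommGroup V] [Module ℝ V] [FiniteDimensional ℝ V]

lemma inertiaSet_bdd (q : QuadraticForm ℝ V) :
    BddAbove {d | ∃ W : Submodule ℝ V, Module.finrank ℝ ↥W = d ∧ ∀ x ∈ W, x ≠ 0 → 0 < q x} := by
  refine ⟨finrank ℝ V, ?_⟩
  rintro d ⟨W, rfl, -⟩
  exact W.finrank_le

lemma inertiaSet_nonempty (q : QuadraticForm ℝ V) :
    Set.Nonempty {d | ∃ W : Submodule ℝ V, Module.finrank ℝ ↥W = d ∧ ∀ x ∈ W, x ≠ 0 → 0 < q x} :=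
  ⟨0, ⊥, by simp, by simp +contextual [Submodule.mem_bot]⟩

lemma le_posInertia (q : QuadraticForm ℝ V) (W : Submodule ℝ V)
    (h : ∀ x ∈ W, x ≠ 0 → 0 < q x) : finrank ℝ W ≤ posInertia q :=
  le_csSup (inertiaSet_bdd q) ⟨W, rfl, h⟩

lemma exists_posInertia_subspace (q : QuadraticForm ℝ V) :
    ∃ W : Submodule ℝ V, finrank ℝ W = posInertia q ∧ ∀ x ∈ W, x ≠ 0 → 0 < q x :=
  Nat.sSup_mem (inertiaSet_nonempty q) (inertiaSet_bdd q)

lemma posInertia_add_negInertia_add_ker_le (q : QuadraticForm ℝ V) :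
    posInertia q + negInertia q + finrank ℝ (qfKer q) ≤ finrank ℝ V := by
  show posInertia q + posInertia (-q) + finrank ℝ (qfKer q) ≤ finrank ℝ V
  obtain ⟨P, hP, hPpos⟩ := exists_posInertia_subspace q
  obtain ⟨N, hN, hNneg⟩ := exists_posInertia_subspace (-q)
  set B := QuadraticMap.associated (R := ℝ) q with hB
  have hsymm : ∀ a b : V, B a b = B b a := fun a b =>
    QuadraticMap.associated_isSymm ℝ q a b
  set K := qfKer q
  let f : (P × N × K) →ₗ[ℝ] V := P.subtype.coprod (N.subtype.coprod K.subtype)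
  have hinj : Function.Injective f := by
    rw [← LinearMap.ker_eq_bot, LinearMap.ker_eq_bot']
    rintro ⟨x, y, z⟩ h0
    have h0' : (x : V) + ((y : V) + (z : V)) = 0 := h0
    have hz : B (z : V) = 0 := z.2
    have h1 : B (x:V) (x:V) + B (y:V) (x:V) = 0 := by
      have := congrArg (fun w => B w (x:V)) h0'
      simpa [map_add, hz] using this
    have h2 : B (x:V) (y:V) + B (y:V) (y:V) = 0 := by
      have := congrArg (fun w => B w (y:V)) h0'
      simpa [map_add, hz] using this
    have hq : q (x:V) = q (y:V) := by
      have e1 : B (x:V) (x:V) = - B (x:V) (y:V) := by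
        rw [hsymm (x:V) (y:V)] at h2 ⊢
        linarith
      have e2 : B (y:V) (y:V) = - B (x:V) (y:V) := by linarith
      have ex : B (x:V) (x:V) = q (x:V) := QuadraticMap.associated_eq_self_apply ℝ q _
      have ey : B (y:V) (y:V) = q (y:V) := QuadraticMap.associated_eq_self_apply ℝ q _
      rw [← ex, ← ey, e1, e2]
    have hx0 : (x : V) = 0 := by
      by_contra hx
      have h1 := hPpos x x.2 (by simpa using hx)
      have h2 : q (y:V) ≤ 0 := by
        rcases eq_or_ne (y : V) 0 with h | h
        · simp [h]
        · have := hNneg y y.2 (by simpa using h)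
          simp only [QuadraticMap.neg_apply] at this; linarith
      rw [hq] at h1; linarith
    have hy0 : (y : V) = 0 := by
      by_contra hy
      have h1 := hNneg y y.2 (by simpa using hy)
      simp only [QuadraticMap.neg_apply] at h1
      have h2 : q (x:V) = 0 := by simp [hx0]
      rw [hq] at h2; linarith
    have hz0 : (z : V) = 0 := by
      have := h0'
      rw [hx0, hy0] at this; simpa using this
    ext <;> simp [hx0, hy0, hz0]
  have hle := LinearMap.finrank_le_finrank_of_injective hinj
  rw [Module.finrank_prod, Module.finrank_prod, hP, hN] at hle
  omega

lemma qf_sum_sq {ι : Type*} [Fintype ι] (q : QuadraticForm ℝ V) (b : Basis ι ℝ V)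
    (horth : (QuadraticMap.associated (R := ℝ) q).IsOrthoᵢ b) (x : V) :
    q x = ∑ i, (b.repr x i)^2 * q (b i) := by
  set B := QuadraticMap.associated (R := ℝ) q with hB
  have hx : x = ∑ i, b.repr x i • b i := (b.sum_repr x).symm
  calc q x = B x x := (QuadraticMap.associated_eq_self_apply ℝ q x).symm
    _ = ∑ i, ∑ j, (b.repr x i) * (b.repr x j) * B (b i) (b j) := by
        conv_lhs => rw [hx]
        simp only [map_sum, map_smul, LinearMap.sum_apply, LinearMap.smul_apply, smul_eq_mul]
        rw [Finset.sum_comm]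
        refine Finset.sum_congr rfl fun i _ => ?_
        rw [Finset.mul_sum]
        exact Finset.sum_congr rfl fun j _ => by ring
    _ = ∑ i, (b.repr x i)^2 * q (b i) := by
        refine Finset.sum_congr rfl fun i _ => ?_
        rw [Finset.sum_eq_single i]
        · rw [QuadraticMap.associated_eq_self_apply ℝ q]; ring
        · intro j _ hj
          rw [horth (Ne.symm hj)]; ring
        · simp

lemma posdef_on_span {ι : Type*} [Fintype ι] (q : QuadraticForm ℝ V) (b : Basis ι ℝ V)
    (horth : (QuadraticMap.associated (R := ℝ) q).IsOrthoᵢ b) (s : Finset ι)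
    (hs : ∀ i ∈ s, 0 < q (b i)) :
    ∀ x ∈ Submodule.span ℝ (b '' ↑s), x ≠ 0 → 0 < q x := by
  intro x hx hx0
  have hsupp : ↑(b.repr x).support ⊆ (↑s : Set ι) := (Basis.mem_span_image b).mp hx
  rw [qf_sum_sq q b horth x]
  apply Finset.sum_pos'
  · intro i _
    rcases eq_or_ne (b.repr x i) 0 with h | h
    · simp [h]
    · have hi : i ∈ s := hsupp (Finsupp.mem_support_iff.mpr h)
      have := hs i hi
      positivity
  · have : (b.repr x) ≠ 0 := fun h => hx0 (by simpa [h] using (b.repr.injective (by simp [h])))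
    obtain ⟨i, hi⟩ := Finsupp.ne_iff.mp this
    simp only [Finsupp.coe_zero, Pi.zero_apply] at hi
    refine ⟨i, Finset.mem_univ i, ?_⟩
    have hi' : i ∈ s := hsupp (Finsupp.mem_support_iff.mpr hi)
    have := hs i hi'
    positivity

lemma finrank_span_basis_image {ι : Type*} [Fintype ι] (b : Basis ι ℝ V) (s : Finset ι) :
    finrank ℝ (Submodule.span ℝ (b '' ↑s)) = s.card := by
  have h1 : (⇑b '' ↑s : Set V) = Set.range (fun i : ↥(↑s : Set ι) => b i) :=
    Set.image_eq_range _ _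
  rw [h1]
  have := finrank_span_eq_card (R := ℝ) (b.linearIndependent.comp
    (Subtype.val : ↥(↑s : Set ι) → ι) Subtype.val_injective)
  simp only [Function.comp_def] at this
  rw [this]
  simp

lemma finrank_le_sum (q : QuadraticForm ℝ V) :
    finrank ℝ V ≤ posInertia q + negInertia q + finrank ℝ (qfKer q) := by
  classical
  obtain ⟨v, hv⟩ := LinearMap.BilinForm.exists_orthogonal_basis
    (QuadraticForm.associated_isSymm ℝ q)
  set B := QuadraticMap.associated (R := ℝ) q with hB
  set sp := Finset.univ.filter (fun i => 0 < q (v i)) with hsp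
  set sm := Finset.univ.filter (fun i => q (v i) < 0) with hsm
  set s0 := Finset.univ.filter (fun i => ¬ (0 < q (v i) ∨ q (v i) < 0)) with hs0
  have hcard : sp.card + sm.card + s0.card = finrank ℝ V := by
    have h1 := Finset.card_filter_add_card_filter_not
      (s := Finset.univ (α := Fin (finrank ℝ V))) (p := fun i => 0 < q (v i) ∨ q (v i) < 0)
    have h2 : (Finset.univ.filter (fun i => 0 < q (v i) ∨ q (v i) < 0)).card
        = sp.card + sm.card := by
      rw [Finset.filter_or, Finset.card_union_of_disjoint]
      rw [Finset.disjoint_filter]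
      intro i _ h h'
      exact absurd h (not_lt.mpr (le_of_lt h'))
    simp only [Finset.card_univ, Fintype.card_fin] at h1
    rw [← hs0] at h1
    omega
  have hpos : sp.card ≤ posInertia q := by
    have := le_posInertia q (Submodule.span ℝ (⇑v '' ↑sp))
      (posdef_on_span q v hv sp (by intro i hi; simpa [hsp] using hi))
    rwa [finrank_span_basis_image] at this
  have hneg : sm.card ≤ negInertia q := by
    have horth' : (QuadraticMap.associated (R := ℝ) (-q)).IsOrthoᵢ v := by
      intro i j hij
      have h : B (v i) (v j) = 0 := hv hij
      show QuadraticMap.associated (R := ℝ) (-q) (v i) (v j) = 0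
      rw [map_neg, ← hB]
      simp [h]
    have := le_posInertia (-q) (Submodule.span ℝ (⇑v '' ↑sm))
      (posdef_on_span (-q) v horth' sm (by
        intro i hi
        simp only [hsm, Finset.mem_filter] at hi
        simpa using hi.2))
    rwa [finrank_span_basis_image] at this
  have hker : s0.card ≤ finrank ℝ (qfKer q) := by
    rw [← finrank_span_basis_image v s0]
    apply Submodule.finrank_mono
    rw [Submodule.span_le]
    rintro _ ⟨i, hi, rfl⟩
    have hi' : ¬(0 < q (v i) ∨ q (v i) < 0) := by simpa [hs0] using hi
    have hqi : q (v i) = 0 := by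
      push_neg at hi'
      linarith [hi'.1, hi'.2]
    show v i ∈ LinearMap.ker B
    rw [LinearMap.mem_ker]
    apply v.ext
    intro j
    rcases eq_or_ne i j with rfl | hij
    · rw [QuadraticMap.associated_eq_self_apply ℝ q]
      simpa using hqi
    · rw [LinearMap.zero_apply]; exact hv hij
  omega

end InertiaAux

section NormedAux

open Module

variable {V : Type*} [NormedAddCommGroup V] [NormedSpace ℝ V] [FiniteDimensional ℝ V]

lemma qf_continuous (q : QuadraticForm ℝ V) : Continuous fun x => q x := by
  have h : ∀ x : V, q x = (QuadraticMap.associated (R := ℝ) q x) x := fun x =>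
    (QuadraticMap.associated_eq_self_apply ℝ q x).symm
  simp only [h]
  set B := QuadraticMap.associated (R := ℝ) q
  let B' : V →ₗ[ℝ] (V →L[ℝ] ℝ) :=
    { toFun := fun x => LinearMap.toContinuousLinearMap (B x)
      map_add' := fun a b => by ext y; simp
      map_smul' := fun c a => by ext y; simp }
  have hB' : Continuous B' := B'.continuous_of_finiteDimensional
  exact isBoundedBilinearMap_apply.continuous.comp (hB'.prodMk continuous_id)

lemma perturb_posdef (g p : QuadraticForm ℝ V) (W : Submodule ℝ V)
    (hW : ∀ x ∈ W, x ≠ 0 → 0 < g x) :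
    ∃ ε₀ : ℝ, 0 < ε₀ ∧ ∀ ε : ℝ, 0 < ε → ε < ε₀ → ∀ x ∈ W, x ≠ 0 → 0 < g x - ε * p x := by
  rcases eq_or_ne W ⊥ with rfl | hWbot
  · exact ⟨1, one_pos, fun ε _ _ x hx hx0 =>
      absurd (by simpa using hx) hx0⟩
  · set S : Set V := (W : Set V) ∩ Metric.sphere 0 1 with hS
    have hScomp : IsCompact S := (isCompact_sphere 0 1).inter_left W.closed_of_finiteDimensional
    have hSne : S.Nonempty := by
      obtain ⟨x, hxW, hx0⟩ := Submodule.exists_mem_ne_zero_of_ne_bot hWbot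
      refine ⟨‖x‖⁻¹ • x, ⟨W.smul_mem _ hxW, ?_⟩⟩
      simp [norm_smul, norm_ne_zero_iff.mpr hx0, inv_mul_cancel₀ (norm_ne_zero_iff.mpr hx0)]
    obtain ⟨u, huS, hu⟩ := hScomp.exists_isMinOn hSne (qf_continuous g).continuousOn
    obtain ⟨w, hwS, hw⟩ := hScomp.exists_isMaxOn hSne
      ((qf_continuous p).abs.continuousOn)
    set c := g u with hc
    set C := |p w| with hC
    have hc0 : 0 < c := by
      refine hW u huS.1 ?_
      intro h
      have := huS.2
      simp [h] at this
    have hC0 : 0 ≤ C := abs_nonneg _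
    refine ⟨c / (C + 1), div_pos hc0 (by linarith), fun ε hε hεlt x hxW hx0 => ?_⟩
    have hxn : ‖x‖ ≠ 0 := norm_ne_zero_iff.mpr hx0
    set v := ‖x‖⁻¹ • x with hv
    have hvS : v ∈ S := by
      refine ⟨W.smul_mem _ hxW, ?_⟩
      simp [hv, norm_smul, abs_of_nonneg (norm_nonneg x), inv_mul_cancel₀ hxn]
    have hxv : x = ‖x‖ • v := by
      rw [hv, smul_smul, mul_inv_cancel₀ hxn, one_smul]
    have hgx : g x = ‖x‖^2 * g v := by
      conv_lhs => rw [hxv]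
      rw [QuadraticMap.map_smul, smul_eq_mul]; ring
    have hpx : p x = ‖x‖^2 * p v := by
      conv_lhs => rw [hxv]
      rw [QuadraticMap.map_smul, smul_eq_mul]; ring
    have h1 : c ≤ g v := hu hvS
    have h2 : |p v| ≤ C := hw hvS
    have h3 : ε * p v < c := by
      have : ε * p v ≤ ε * |p v| := by
        have := le_abs_self (p v); nlinarith
      have h4 : ε * |p v| ≤ ε * (C + 1) := by nlinarith
      have h5 : ε * (C + 1) < (c / (C + 1)) * (C + 1) := by
        apply mul_lt_mul_of_pos_right hεlt; linarith
      rw [div_mul_cancel₀ _ (by linarith : C + 1 ≠ 0)] at h5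
      linarith
    have hx2 : (0:ℝ) < ‖x‖^2 := by positivity
    rw [hgx, hpx]
    nlinarith

end NormedAux

/-- For a quadratic form `g` and a positive definite form `p` on `ℝ^m`,
for all sufficiently small `ε > 0` one has `i⁻(g - εp) = i⁻(g) + dim ker g`. -/
theorem negInertia_perturbation (m : ℕ)
    (g p : QuadraticForm ℝ (EuclideanSpace ℝ (Fin m)))
    (hp : ∀ x : EuclideanSpace ℝ (Fin m), x ≠ 0 → 0 < p x) :
    ∃ ε₀ : ℝ, 0 < ε₀ ∧ ∀ ε : ℝ, 0 < ε → ε < ε₀ →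
      negInertia (g - ε • p) = negInertia g + Module.finrank ℝ ↥(qfKer g) := by
  classical
  obtain ⟨P, hPrank, hPpos⟩ := exists_posInertia_subspace g
  obtain ⟨ε₀, hε₀, hmax⟩ := perturb_posdef g p P hPpos
  refine ⟨ε₀, hε₀, fun ε hε hεlt => ?_⟩
  have hm : Module.finrank ℝ (EuclideanSpace ℝ (Fin m)) = m := finrank_euclideanSpace_fin
  set B := QuadraticMap.associated (R := ℝ) g with hB
  have hsym : ∀ a b, B a b = B b a := fun a b => QuadraticMap.associated_isSymm ℝ g a b
  obtain ⟨N, hNrank, hNneg⟩ := exists_posInertia_subspace (-g)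
  -- the kernel behaves trivially
  have hkerg : ∀ z ∈ qfKer g, ∀ y, g (y + z) = g y := by
    intro z hz y
    have hz0 : B z = 0 := hz
    have : g (y + z) = B y y := by
      rw [← QuadraticMap.associated_eq_self_apply ℝ g (y + z), ← hB]
      have hzy : B z y = 0 := by rw [hz0]; simp
      have hyz : B y z = 0 := by rw [hsym y z, hzy]
      have hzz : B z z = 0 := by rw [hz0]; simp
      simp [map_add, hyz, hzy, hzz]
    rw [this, QuadraticMap.associated_eq_self_apply ℝ g y]
  -- lower bound
  have hinf : N ⊓ qfKer g = ⊥ := by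
    rw [eq_bot_iff]
    rintro x ⟨hxN, hxK⟩
    rw [Submodule.mem_bot]
    by_contra hx0
    have h1 := hNneg x hxN hx0
    have h2 : g x = 0 := by
      have hzz : B x = 0 := hxK
      rw [← QuadraticMap.associated_eq_self_apply ℝ g x, ← hB, hzz]
      simp
    simp only [QuadraticMap.neg_apply, h2] at h1
    linarith
  have hWrank : Module.finrank ℝ ↥(N ⊔ qfKer g)
      = negInertia g + Module.finrank ℝ ↥(qfKer g) := by
    have h := Submodule.finrank_sup_add_finrank_inf_eq N (qfKer g)
    rw [hinf] at h
    simp only [finrank_bot, add_zero] at h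
    rw [h, hNrank]
    rfl
  have hWneg : ∀ x ∈ N ⊔ qfKer g, x ≠ 0 → 0 < (-(g - ε • p)) x := by
    intro x hx hx0
    obtain ⟨y, hy, z, hz, rfl⟩ := Submodule.mem_sup.mp hx
    have hgx : g (y + z) = g y := hkerg z hz y
    have hgy : g y ≤ 0 := by
      rcases eq_or_ne y 0 with rfl | hy0
      · simp
      · have := hNneg y hy hy0
        simp only [QuadraticMap.neg_apply] at this
        linarith
    have hpx : 0 < p (y + z) := hp _ hx0
    simp only [QuadraticMap.neg_apply, QuadraticMap.sub_apply, QuadraticMap.smul_apply,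
      smul_eq_mul, hgx]
    nlinarith
  have hlow : negInertia g + Module.finrank ℝ ↥(qfKer g) ≤ negInertia (g - ε • p) := by
    have h := le_posInertia (-(g - ε • p)) (N ⊔ qfKer g) hWneg
    rw [hWrank] at h
    exact h
  -- upper bound
  have hup1 : posInertia g ≤ posInertia (g - ε • p) := by
    have hpos : ∀ x ∈ P, x ≠ 0 → 0 < (g - ε • p) x := by
      intro x hxP hx0
      have := hmax ε hε hεlt x hxP hx0
      simpa [QuadraticMap.sub_apply, QuadraticMap.smul_apply, smul_eq_mul] using this
    have h := le_posInertia (g - ε • p) P hpos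
    rw [hPrank] at h
    exact h
  have hB1 := posInertia_add_negInertia_add_ker_le (g - ε • p)
  have hC1 := finrank_le_sum g
  rw [hm] at hB1 hC1
  omega


end
end
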